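/- If F is a finite field with |F| > 3, then SL(2,F) is perfect, i.e., equals its own commutator subgroup. -/

import Mathlib

open Matrix MatrixGroups
open scoped commutatorElement

section SL2Perfect

variable {F : Type*} [Field F]

private def myU (t : F) : SL(2,F) := ⟨!![1,t;0,1], by simp [Matrix.det_fin_two_of]⟩
private def myL (t : F) : SL(2,F) := ⟨!![1,0;t,1], by simp [Matrix.det_fin_two_of]⟩
private def myD (a : F) (ha : a ≠ 0) : SL(2,F) :=
  ⟨!![a,0;0,a⁻¹], by simp [Matrix.det_fin_two_of, mul_inv_cancel₀ ha]⟩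

private lemma comm_D_U (a t : F) (ha : a ≠ 0) :
    ⁅myD a ha, myU t⁆ = myU ((a^2 - 1)*t) := by
  have := mul_inv_cancel₀ ha
  ext i j
  simp only [commutatorElement_def, Matrix.SpecialLinearGroup.coe_mul, Matrix.SpecialLinearGroup.coe_inv]
  fin_cases i <;> fin_cases j <;>
    simp [myD, myU, commutatorElement_def, Matrix.SpecialLinearGroup.SL2_inv_expl, Matrix.adjugate_fin_two,
      Matrix.mul_apply, Matrix.vecMul, dotProduct, Fin.sum_univ_two] <;>
    field_simp <;> ring

private lemma comm_D_L (a t : F) (ha : a ≠ 0) :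
    ⁅myD a ha, myL t⁆ = myL ((a⁻¹^2 - 1)*t) := by
  have := mul_inv_cancel₀ ha
  ext i j
  simp only [commutatorElement_def, Matrix.SpecialLinearGroup.coe_mul, Matrix.SpecialLinearGroup.coe_inv]
  fin_cases i <;> fin_cases j <;>
    simp [myD, myL, commutatorElement_def, Matrix.SpecialLinearGroup.SL2_inv_expl, Matrix.adjugate_fin_two,
      Matrix.mul_apply, Matrix.vecMul, dotProduct, Fin.sum_univ_two] <;>
    field_simp <;> ring

private lemma exists_a [Fintype F] (h : 3 < Fintype.card F) :
    ∃ a : F, a ≠ 0 ∧ a ^ 2 ≠ 1 := by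
  classical
  by_contra hcon
  push_neg at hcon
  have hsub : (Finset.univ : Finset F) ⊆ {(0:F), 1, -1} := by
    intro a _
    rcases eq_or_ne a 0 with h0 | h0
    · simp [h0]
    · have := hcon a h0
      have : (a - 1) * (a + 1) = 0 := by ring_nf; linear_combination this
      rcases mul_eq_zero.mp this with h1 | h1
      · simp [sub_eq_zero.mp h1]
      · have : a = -1 := eq_neg_of_add_eq_zero_left h1
        simp [this]
  have := Finset.card_le_card hsub
  have h3 : ({(0:F), 1, -1} : Finset F).card ≤ 3 := by
    refine (Finset.card_insert_le _ _).trans ?_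
    have h4 := Finset.card_insert_le (1:F) ({-1} : Finset F)
    simp only [Finset.card_singleton] at h4 ⊢
    omega
  rw [Finset.card_univ] at this
  omega

private lemma U_mem [Fintype F] (h : 3 < Fintype.card F) (t : F) :
    myU t ∈ commutator (SL(2,F)) := by
  obtain ⟨a, ha, ha2⟩ := exists_a h
  have hne : a^2 - 1 ≠ 0 := sub_ne_zero.mpr ha2
  have : myU t = ⁅myD a ha, myU ((a^2-1)⁻¹ * t)⁆ := by
    rw [comm_D_U]
    congr 1
    rw [← mul_assoc, mul_inv_cancel₀ hne, one_mul]
  rw [this, commutator_def]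
  exact Subgroup.commutator_mem_commutator (Subgroup.mem_top _) (Subgroup.mem_top _)

private lemma L_mem [Fintype F] (h : 3 < Fintype.card F) (t : F) :
    myL t ∈ commutator (SL(2,F)) := by
  obtain ⟨a, ha, ha2⟩ := exists_a h
  have hia : a⁻¹ ≠ 0 := inv_ne_zero ha
  have ha2' : a⁻¹^2 ≠ 1 := by
    intro hcon
    apply ha2
    have : (a^2) * (a⁻¹^2) = 1 := by field_simp
    rw [hcon, mul_one] at this; exact this
  have hne : a⁻¹^2 - 1 ≠ 0 := sub_ne_zero.mpr ha2'
  have : myL t = ⁅myD a ha, myL ((a⁻¹^2-1)⁻¹ * t)⁆ := by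
    rw [comm_D_L]
    congr 1
    rw [← mul_assoc, mul_inv_cancel₀ hne, one_mul]
  rw [this, commutator_def]
  exact Subgroup.commutator_mem_commutator (Subgroup.mem_top _) (Subgroup.mem_top _)

private lemma decomp (g : SL(2,F)) (hc : g.1 1 0 ≠ 0) :
    g = myU ((g.1 0 0 - 1) / g.1 1 0) * myL (g.1 1 0) * myU ((g.1 1 1 - 1) / g.1 1 0) := by
  have hdet : g.1 0 0 * g.1 1 1 - g.1 0 1 * g.1 1 0 = 1 := by
    have := g.2; rwa [Matrix.det_fin_two] at this
  ext i j
  simp only [Matrix.SpecialLinearGroup.coe_mul]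
  fin_cases i <;> fin_cases j <;>
    simp [myU, myL, Matrix.mul_apply, Fin.sum_univ_two] <;>
    field_simp
  · linear_combination
  · linear_combination -hdet
  · ring

end SL2Perfect

/-- If `F` is a finite field with `|F| > 3`, then `SL(2,F)` is perfect. -/
theorem stmt2 (F : Type*) [Field F] [Fintype F] (h : 3 < Fintype.card F) :
    commutator (Matrix.SpecialLinearGroup (Fin 2) F) = ⊤ := by
  rw [eq_top_iff]
  intro g _
  have key : ∀ g : SL(2,F), g.1 1 0 ≠ 0 → g ∈ commutator (SL(2,F)) := by
    intro g hc
    rw [decomp g hc]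
    exact Subgroup.mul_mem _ (Subgroup.mul_mem _ (U_mem h _) (L_mem h _)) (U_mem h _)
  by_cases hc : g.1 1 0 ≠ 0
  · exact key g hc
  · push_neg at hc
    have hdet : g.1 0 0 * g.1 1 1 - g.1 0 1 * g.1 1 0 = 1 := by
      have := g.2; rwa [Matrix.det_fin_two] at this
    have hd : g.1 1 1 ≠ 0 := by
      intro h0; rw [hc, h0] at hdet; simp at hdet
    have hgl : (g * myL 1).1 1 0 ≠ 0 := by
      simp only [Matrix.SpecialLinearGroup.coe_mul]
      simp [Matrix.SpecialLinearGroup.coe_mul, myL, Matrix.mul_apply, Fin.sum_univ_two, hc, hd]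
    have hmem := key _ hgl
    have : g = (g * myL 1) * (myL 1)⁻¹ := by group
    rw [this]
    exact Subgroup.mul_mem _ hmem (Subgroup.inv_mem _ (L_mem h 1))
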